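/- Let (Ω, μ) be a probability space and K ≥ 1. For each i ∈ {0, 1, ..., K} let ℓ_i : ℕ → Ω → ℝ be a sequence of measurable functions and let p_i ∈ ℝ. Define PIC_i(n, ω) = -2·ℓ_i(n, ω) + p_i·log n. Suppose that for each i ∈ {1, ..., K} either (a) there exists a real constant Δ_i > 0 such that the functions ω ↦ (ℓ_0(n, ω) - ℓ_i(n, ω))/n converge in measure (as n → ∞) to the constant function Δ_i, or (b) p_0 < p_i and the functions ω ↦ (ℓ_0(n, ω) - ℓ_i(n, ω))/log n converge in measure to the constant function 0. Then μ({ω : PIC_0(n, ω) < PIC_i(n, ω) for every i ∈ {1, ..., K}}) → 1 as n → ∞. -/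

import Mathlib

open MeasureTheory Filter Topology

/-- Consistency of the PIC criterion (paper's Theorem 1): if every alternative model
either has a strictly positive expected log-likelihood gap (case (a)) or is a
strictly-less-parsimonious supermodel (case (b)), then the probability that the
true model (index 0) achieves the strictly smallest PIC among all candidates
tends to one. -/
theorem pic_consistency
    {Ω : Type*} [MeasurableSpace Ω] (μ : Measure Ω) [IsProbabilityMeasure μ]
    (K : ℕ) (hK : 1 ≤ K)
    (ℓ : ℕ → ℕ → Ω → ℝ) (p : ℕ → ℝ)
    (hmeas : ∀ i, i ≤ K → ∀ n, Measurable (ℓ i n))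
    (PIC : ℕ → ℕ → Ω → ℝ)
    (hPIC : ∀ i n ω, PIC i n ω = -2 * ℓ i n ω + p i * Real.log n)
    (hcases : ∀ i, 1 ≤ i → i ≤ K →
      (∃ Δ : ℝ, 0 < Δ ∧
        TendstoInMeasure μ (fun n ω => (ℓ 0 n ω - ℓ i n ω) / (n : ℝ)) atTop
          (fun _ => Δ)) ∨
      (p 0 < p i ∧
        TendstoInMeasure μ (fun n ω => (ℓ 0 n ω - ℓ i n ω) / Real.log n) atTop
          (fun _ => (0 : ℝ)))) :
    Tendsto (fun n => μ {ω | ∀ i, 1 ≤ i → i ≤ K → PIC 0 n ω < PIC i n ω})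
      atTop (𝓝 1) := by
  have hPICmeas : ∀ i, i ≤ K → ∀ n, Measurable (PIC i n) := by
    intro i hi n
    have : PIC i n = fun ω => -2 * ℓ i n ω + p i * Real.log n :=
      funext fun ω => hPIC i n ω
    rw [this]
    exact ((hmeas i hi n).const_mul _).add_const _
  set bad : ℕ → ℕ → Set Ω := fun i n => {ω | PIC i n ω ≤ PIC 0 n ω} with hbaddef
  have hbadmeas : ∀ i, i ≤ K → ∀ n, MeasurableSet (bad i n) := fun i hi n =>
    measurableSet_le (hPICmeas i hi n) (hPICmeas 0 (Nat.zero_le K) n)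
  -- each bad set has measure tending to zero
  have key : ∀ i, 1 ≤ i → i ≤ K → Tendsto (fun n => μ (bad i n)) atTop (𝓝 0) := by
    intro i h1 hiK
    rcases hcases i h1 hiK with ⟨Δ, hΔ, htend⟩ | ⟨hp, htend⟩
    · -- case (a)
      have h2 := tendstoInMeasure_iff_dist.mp htend (Δ / 2) (by positivity)
      refine tendsto_of_tendsto_of_tendsto_of_le_of_le' tendsto_const_nhds h2
        (Eventually.of_forall fun n => zero_le) ?_
      set c : ℝ := p 0 - p i with hc
      have hlog : ∀ᶠ x : ℝ in atTop, ‖Real.log x‖ ≤ (Δ / (|c| + 1)) * ‖x‖ :=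
        Real.isLittleO_log_id_atTop.def (by positivity)
      have hlogn := tendsto_natCast_atTop_atTop (R := ℝ) |>.eventually hlog
      filter_upwards [hlogn, eventually_ge_atTop 1] with n hn hn1
      apply measure_mono
      intro ω hω
      simp only [hbaddef, Set.mem_setOf_eq] at hω ⊢
      rw [hPIC, hPIC] at hω
      have hcn : c * Real.log n ≤ Δ * n := by
        have h0 : (0:ℝ) ≤ Real.log n := Real.log_natCast_nonneg n
        have h1' : c * Real.log n ≤ |c| * Real.log n := by
          have := le_abs_self c
          nlinarith
        have h2' : |c| * Real.log n ≤ |c| * ((Δ / (|c| + 1)) * n) := by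
          have hn' : Real.log n ≤ (Δ / (|c| + 1)) * n := by
            have : ‖Real.log (n:ℝ)‖ = Real.log n := Real.norm_of_nonneg h0
            have hnn : ‖(n:ℝ)‖ = (n:ℝ) := Real.norm_of_nonneg (by positivity)
            rw [this, hnn] at hn
            exact hn
          exact mul_le_mul_of_nonneg_left hn' (abs_nonneg c)
        have h3' : |c| * ((Δ / (|c| + 1)) * n) ≤ Δ * n := by
          have hab : |c| * (Δ / (|c| + 1)) ≤ Δ := by
            have hpos : (0:ℝ) < |c| + 1 := by positivity
            rw [div_eq_mul_inv, mul_comm Δ, ← mul_assoc, ← div_eq_mul_inv]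
            have h1 : |c| / (|c| + 1) ≤ 1 :=
              div_le_one_of_le₀ (by linarith [abs_nonneg c]) hpos.le
            nlinarith [hΔ.le]
          have : (0:ℝ) ≤ (n:ℝ) := by positivity
          nlinarith [abs_nonneg c, hΔ.le]
        linarith
      have hnpos : (0:ℝ) < (n:ℝ) := by exact_mod_cast hn1
      have hf : (ℓ 0 n ω - ℓ i n ω) / n ≤ Δ / 2 := by
        rw [div_le_div_iff₀ hnpos (by norm_num : (0:ℝ) < 2)]
        have : 2 * (ℓ 0 n ω - ℓ i n ω) ≤ c * Real.log n := by
          simp only [hc]; linarith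
        nlinarith
      have : Δ / 2 ≤ Δ - (ℓ 0 n ω - ℓ i n ω) / n := by linarith
      calc Δ / 2 ≤ Δ - (ℓ 0 n ω - ℓ i n ω) / n := this
        _ ≤ |((ℓ 0 n ω - ℓ i n ω) / n) - Δ| := by
            rw [abs_sub_comm]; exact le_abs_self _
        _ = dist ((ℓ 0 n ω - ℓ i n ω) / n) Δ := (Real.dist_eq _ _).symm
    · -- case (b)
      have hε : (0:ℝ) < (p i - p 0) / 2 := by linarith
      have h2 := tendstoInMeasure_iff_dist.mp htend ((p i - p 0) / 2) hε
      refine tendsto_of_tendsto_of_tendsto_of_le_of_le' tendsto_const_nhds h2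
        (Eventually.of_forall fun n => zero_le) ?_
      filter_upwards [eventually_ge_atTop 2] with n hn2
      apply measure_mono
      intro ω hω
      simp only [hbaddef, Set.mem_setOf_eq] at hω ⊢
      rw [hPIC, hPIC] at hω
      have hL : (0:ℝ) < Real.log n := by
        apply Real.log_pos
        exact_mod_cast lt_of_lt_of_le one_lt_two hn2
      have hf : (ℓ 0 n ω - ℓ i n ω) / Real.log n ≤ (p 0 - p i) / 2 := by
        rw [div_le_div_iff₀ hL (by norm_num : (0:ℝ) < 2)]
        nlinarith
      have : (p i - p 0) / 2 ≤ |((ℓ 0 n ω - ℓ i n ω) / Real.log n)| := by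
        have := neg_le_abs ((ℓ 0 n ω - ℓ i n ω) / Real.log n)
        linarith
      calc (p i - p 0) / 2 ≤ |((ℓ 0 n ω - ℓ i n ω) / Real.log n)| := this
        _ = dist ((ℓ 0 n ω - ℓ i n ω) / Real.log n) 0 := by
            rw [Real.dist_eq, sub_zero]
  -- union bound
  set U : ℕ → Set Ω := fun n => ⋃ i ∈ Finset.Icc 1 K, bad i n with hUdef
  have hUmeas : ∀ n, MeasurableSet (U n) := by
    intro n
    apply Finset.measurableSet_biUnion
    intro i hi
    exact hbadmeas i (Finset.mem_Icc.mp hi).2 n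
  have hUzero : Tendsto (fun n => μ (U n)) atTop (𝓝 0) := by
    have hsum : Tendsto (fun n => ∑ i ∈ Finset.Icc 1 K, μ (bad i n)) atTop (𝓝 0) := by
      have := tendsto_finset_sum (Finset.Icc 1 K)
        (fun i hi => key i (Finset.mem_Icc.mp hi).1 (Finset.mem_Icc.mp hi).2)
      simpa using this
    refine tendsto_of_tendsto_of_tendsto_of_le_of_le' tendsto_const_nhds hsum
      (Eventually.of_forall fun n => zero_le)
      (Eventually.of_forall fun n => measure_biUnion_finset_le _ _)
  have hset : ∀ n, {ω | ∀ i, 1 ≤ i → i ≤ K → PIC 0 n ω < PIC i n ω} = (U n)ᶜ := by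
    intro n
    ext ω
    simp only [Set.mem_setOf_eq, hUdef, Set.mem_compl_iff, Set.mem_iUnion,
      hbaddef, Finset.mem_Icc, not_exists, not_le]
    constructor
    · rintro h i ⟨hi1, hi2⟩
      exact h i hi1 hi2
    · intro h i hi1 hi2
      exact h i ⟨hi1, hi2⟩
  have hcompl : ∀ n, μ {ω | ∀ i, 1 ≤ i → i ≤ K → PIC 0 n ω < PIC i n ω}
      = 1 - μ (U n) := by
    intro n
    rw [hset n, measure_compl (hUmeas n) (measure_ne_top μ _), measure_univ]
  simp only [hcompl]
  have : Tendsto (fun n => (1:ENNReal) - μ (U n)) atTop (𝓝 (1 - 0)) :=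
    ENNReal.Tendsto.sub tendsto_const_nhds hUzero (Or.inl ENNReal.one_ne_top)
  simpa using this
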